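/- Let A, B, C be d×d complex matrices with equal diagonals and suppose the map Φ^{(3)}_{(A,B,C)} : M_d(ℂ) → M_d(ℂ) is positive, i.e. it sends every positive semidefinite matrix to a positive semidefinite matrix. Then: (i) every entry of A is a nonnegative real number; (ii) B and C are Hermitian; and (iii) √(A_ii·A_jj) + √(A_ij·A_ji) − |B_ij| − |C_ij| ≥ 0 for all i ≠ j. -/

import Mathlib

open Matrix
open scoped ComplexOrder

/-- The DOC map `Φ^{(3)}_{(A,B,C)}`:
`Φ(Z) = Diag(A z) + B̃ ⊙ Z + C̃ ⊙ Zᵀ`, where `z = diag Z` and `B̃, C̃` are `B, C`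
with their diagonals set to zero. -/
noncomputable def Phi3 {d : ℕ} (A B C : Matrix (Fin d) (Fin d) ℂ)
    (Z : Matrix (Fin d) (Fin d) ℂ) : Matrix (Fin d) (Fin d) ℂ :=
  Matrix.diagonal (fun i => ∑ j, A i j * Z j j) +
    (Matrix.of fun i j => if i = j then 0 else B i j) ⊙ Z +
    (Matrix.of fun i j => if i = j then 0 else C i j) ⊙ Zᵀ


lemma rankOnePSD {d : ℕ} (v : Fin d → ℂ) :
    (Matrix.of fun p q => v p * (starRingEnd ℂ) (v q)).PosSemidef := by
  refine posSemidef_iff_dotProduct_mulVec.mpr ⟨?_, ?_⟩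
  · ext p q
    simp [Matrix.conjTranspose_apply, mul_comm]
  · intro x
    have h1 : ∀ p, ((Matrix.of fun p q => v p * (starRingEnd ℂ) (v q)) *ᵥ x) p
        = v p * ∑ q, (starRingEnd ℂ) (v q) * x q := by
      intro p
      simp only [mulVec, dotProduct, Matrix.of_apply, Finset.mul_sum]
      exact Finset.sum_congr rfl fun q _ => by ring
    have h2 : star (∑ q, (starRingEnd ℂ) (v q) * x q) = ∑ p, star (x p) * v p := by
      rw [star_sum]
      exact Finset.sum_congr rfl fun q _ => by simp [star_mul', mul_comm]
    have h : dotProduct (star x) ((Matrix.of fun p q => v p * (starRingEnd ℂ) (v q)) *ᵥ x)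
        = star (∑ q, (starRingEnd ℂ) (v q) * x q) * ∑ q, (starRingEnd ℂ) (v q) * x q := by
      unfold dotProduct
      rw [h2, Finset.sum_mul]
      exact Finset.sum_congr rfl fun p _ => by rw [h1 p, Pi.star_apply]; ring
    rw [h]
    exact star_mul_self_nonneg _

lemma quadForm2 {d : ℕ} {M : Matrix (Fin d) (Fin d) ℂ} (hM : M.PosSemidef)
    {i j : Fin d} (hij : i ≠ j) (a b : ℂ) :
    0 ≤ (starRingEnd ℂ) a * (M i i * a + M i j * b) +
        (starRingEnd ℂ) b * (M j i * a + M j j * b) := by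
  have h := hM.dotProduct_mulVec_nonneg (Pi.single i a + Pi.single j b)
  rw [star_add, ← Pi.single_star, ← Pi.single_star] at h
  simp only [mulVec_add, mulVec_single, add_dotProduct, single_dotProduct,
    Pi.add_apply] at h
  exact h

lemma diagNonneg {d : ℕ} {M : Matrix (Fin d) (Fin d) ℂ} (hM : M.PosSemidef) (i : Fin d) :
    0 ≤ M i i := by
  have h := hM.dotProduct_mulVec_nonneg (Pi.single i 1)
  rw [← Pi.single_star] at h
  simp only [mulVec_single, single_dotProduct] at h
  simpa using h

lemma entryBound {d : ℕ} {M : Matrix (Fin d) (Fin d) ℂ} (hM : M.PosSemidef)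
    {i j : Fin d} (hij : i ≠ j) :
    ‖M i j‖ ^ 2 ≤ (M i i).re * (M j j).re := by
  have hii := diagNonneg hM i
  have hjj := diagNonneg hM j
  have hx : M i i = ((M i i).re : ℂ) := by
    apply Complex.ext
    · rfl
    · simpa using ((Complex.le_def.mp hii).2).symm
  have hy : M j j = ((M j j).re : ℂ) := by
    apply Complex.ext
    · rfl
    · simpa using ((Complex.le_def.mp hjj).2).symm
  have hxr : (0:ℝ) ≤ (M i i).re := (Complex.le_def.mp hii).1
  have hyr : (0:ℝ) ≤ (M j j).re := (Complex.le_def.mp hjj).1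
  have hji : M j i = (starRingEnd ℂ) (M i j) := by
    simpa using congrArg star (hM.1.apply i j)
  set x := (M i i).re
  set y := (M j j).re
  by_cases hy0 : 0 < y
  · -- use a = y, b = - conj (M i j)
    have h := quadForm2 hM hij ((y:ℂ)) (-(starRingEnd ℂ) (M i j))
    have he : (starRingEnd ℂ) ((y:ℂ)) * (M i i * (y:ℂ) + M i j * (-(starRingEnd ℂ) (M i j))) +
        (starRingEnd ℂ) (-(starRingEnd ℂ) (M i j)) * (M j i * (y:ℂ) + M j j * (-(starRingEnd ℂ) (M i j)))
        = ((y * (x * y - ‖M i j‖ ^ 2) : ℝ) : ℂ) := by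
      rw [hji, hx, hy]
      rw [← Complex.normSq_eq_norm_sq]
      push_cast
      rw [Complex.normSq_eq_conj_mul_self]
      simp only [Complex.conj_ofReal, map_neg, map_add, _root_.map_mul, map_div₀, _root_.map_one, map_ofNat]
      ring
    rw [he] at h
    have := (Complex.le_def.mp h).1
    simp only [Complex.zero_re, Complex.ofReal_re] at this
    nlinarith
  · -- y = 0 : show M i j = 0
    have hy0' : y = 0 := le_antisymm (not_lt.mp hy0) hyr
    have h := quadForm2 hM hij (M i j) (-(((x+1)/2 : ℝ) : ℂ))
    have he : (starRingEnd ℂ) (M i j) * (M i i * (M i j) + M i j * (-(((x+1)/2:ℝ):ℂ))) +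
        (starRingEnd ℂ) (-(((x+1)/2:ℝ):ℂ)) * (M j i * (M i j) + M j j * (-(((x+1)/2:ℝ):ℂ)))
        = ((- ‖M i j‖ ^ 2 : ℝ) : ℂ) := by
      rw [hji, hx, hy, hy0']
      rw [← Complex.normSq_eq_norm_sq]
      push_cast
      rw [Complex.normSq_eq_conj_mul_self]
      simp only [Complex.conj_ofReal, map_neg, map_add, _root_.map_mul, map_div₀, _root_.map_one, map_ofNat]
      ring
    rw [he] at h
    have h2 := (Complex.le_def.mp h).1
    simp only [Complex.zero_re, Complex.ofReal_re] at h2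
    nlinarith [norm_nonneg (M i j), sq_nonneg (‖M i j‖)]


lemma phaseExists (b c : ℂ) : ∃ ζ : ℂ, ‖ζ‖ = 1 ∧
    ‖b * ζ + c * (starRingEnd ℂ) ζ‖ = ‖b‖ + ‖c‖ := by
  by_cases hb : b = 0
  · exact ⟨1, by simp [hb]⟩
  by_cases hc : c = 0
  · exact ⟨1, by simp [hc]⟩
  have hb0 : 0 < ‖b‖ := by simpa [norm_pos_iff] using hb
  have hc0 : 0 < ‖c‖ := by simpa [norm_pos_iff] using hc
  have hbC : ((‖b‖ : ℝ) : ℂ) ≠ 0 := by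
    exact_mod_cast Complex.ofReal_ne_zero.mpr (ne_of_gt hb0)
  have hcC : ((‖c‖ : ℝ) : ℂ) ≠ 0 := by
    exact_mod_cast Complex.ofReal_ne_zero.mpr (ne_of_gt hc0)
  obtain ⟨ζ, hζ⟩ := IsAlgClosed.exists_pow_nat_eq
    (c * (starRingEnd ℂ) b / ((‖b‖ * ‖c‖ : ℝ) : ℂ)) (n := 2) (by norm_num)
  have habs : ‖ζ‖ = 1 := by
    have h2 : ‖ζ‖ ^ 2 = 1 := by
      rw [← norm_pow, hζ]
      rw [norm_div, norm_mul, Complex.norm_conj, Complex.norm_real, Real.norm_eq_abs]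
      rw [abs_of_nonneg (by positivity)]
      rw [div_eq_one_iff_eq (by positivity)]
      ring
    nlinarith [norm_nonneg ζ]
  refine ⟨ζ, habs, ?_⟩
  have hζζ : ζ * (starRingEnd ℂ) ζ = 1 := by
    rw [Complex.mul_conj, Complex.normSq_eq_norm_sq, habs]; norm_num
  have key : b * ζ + c * (starRingEnd ℂ) ζ
      = (starRingEnd ℂ) ζ * c * (((‖b‖ + ‖c‖) / ‖c‖ : ℝ) : ℂ) := by
    have hbb : b * (starRingEnd ℂ) b = ((‖b‖ ^ 2 : ℝ) : ℂ) := by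
      rw [Complex.mul_conj, Complex.normSq_eq_norm_sq]
    have hbz : b * (ζ * ζ) = c * ((‖b‖ / ‖c‖ : ℝ) : ℂ) := by
      have : ζ ^ 2 = c * (starRingEnd ℂ) b / ((‖b‖ * ‖c‖ : ℝ) : ℂ) := hζ
      rw [← pow_two, this]
      rw [mul_div_assoc']
      rw [show b * (c * (starRingEnd ℂ) b) = c * (b * (starRingEnd ℂ) b) by ring, hbb]
      push_cast
      field_simp
    calc b * ζ + c * (starRingEnd ℂ) ζ
        = (starRingEnd ℂ) ζ * (b * (ζ * ζ)) + c * (starRingEnd ℂ) ζ := by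
          rw [show (starRingEnd ℂ) ζ * (b * (ζ * ζ)) = b * ζ * (ζ * (starRingEnd ℂ) ζ) by ring,
            hζζ]; ring
      _ = (starRingEnd ℂ) ζ * c * (((‖b‖ + ‖c‖) / ‖c‖ : ℝ) : ℂ) := by
          rw [hbz]
          push_cast
          field_simp
  rw [key]
  rw [norm_mul, norm_mul, Complex.norm_conj, habs, Complex.norm_real, Real.norm_eq_abs]
  rw [abs_of_nonneg (by positivity)]
  field_simp

lemma realIneq {L c m p : ℝ} (hL : 0 ≤ L) (hc : 0 ≤ c) (hm : 0 ≤ m) (hp : 0 ≤ p)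
    (h : ∀ s : ℝ, 0 < s → L ^ 2 * s ≤ c + m * s + p * s ^ 2) :
    L ^ 2 ≤ m + 2 * Real.sqrt (c * p) := by
  have hsq : 0 ≤ Real.sqrt (c * p) := Real.sqrt_nonneg _
  by_cases ht : L ^ 2 - m ≤ 0
  · nlinarith
  push_neg at ht
  set t := L ^ 2 - m with htdef
  have hp' : 0 < p := by
    rcases lt_or_eq_of_le hp with h' | h'
    · exact h'
    · exfalso
      have hs := h ((c + 1) / t) (by positivity)
      rw [← h'] at hs
      have : t * ((c + 1) / t) ≤ c := by nlinarith
      rw [mul_div_cancel₀ _ (ne_of_gt ht)] at this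
      linarith
  have hs := h (t / (2 * p)) (by positivity)
  have ht2 : t ^ 2 ≤ 4 * (c * p) := by
    have h1 : t * (t / (2 * p)) ≤ c + p * (t / (2 * p)) ^ 2 := by nlinarith
    have h2 : t * (t / (2 * p)) = t ^ 2 / (2 * p) := by ring
    have h3 : p * (t / (2 * p)) ^ 2 = t ^ 2 / (4 * p) := by
      field_simp; ring
    rw [h2, h3] at h1
    have h4 : t ^ 2 / (2 * p) - t ^ 2 / (4 * p) = t ^ 2 / (4 * p) := by
      field_simp; ring
    have h5 : t ^ 2 / (4 * p) ≤ c := by linarith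
    rw [div_le_iff₀ (by positivity)] at h5
    nlinarith
  have : t ≤ 2 * Real.sqrt (c * p) := by
    have := Real.sqrt_le_sqrt ht2
    rw [Real.sqrt_sq (le_of_lt ht)] at this
    have h4 : Real.sqrt (4 * (c * p)) = 2 * Real.sqrt (c * p) := by
      rw [show (4 : ℝ) * (c * p) = 2 ^ 2 * (c * p) by norm_num, Real.sqrt_mul (by positivity),
        Real.sqrt_sq (by norm_num)]
    linarith [h4 ▸ this]
  linarith


lemma phi3_apply_diag {d : ℕ} (A B C Z : Matrix (Fin d) (Fin d) ℂ) (i : Fin d) :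
    Phi3 A B C Z i i = ∑ k, A i k * Z k k := by
  simp [Phi3, Matrix.hadamard_apply]

lemma phi3_apply_ne {d : ℕ} (A B C Z : Matrix (Fin d) (Fin d) ℂ) {i j : Fin d} (hij : i ≠ j) :
    Phi3 A B C Z i j = B i j * Z i j + C i j * Z j i := by
  simp [Phi3, Matrix.hadamard_apply, Matrix.diagonal_apply_ne _ hij, hij]

lemma sum_two {d : ℕ} {i j : Fin d} (hij : i ≠ j) (w : Fin d → ℂ)
    (hw : ∀ k, k ≠ i → k ≠ j → w k = 0) : ∑ k, w k = w i + w j := by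
  rw [← Finset.sum_pair hij]
  refine (Finset.sum_subset (Finset.subset_univ _) ?_).symm
  intro k _ hk
  simp only [Finset.mem_insert, Finset.mem_singleton] at hk
  push_neg at hk
  exact hw k hk.1 hk.2


lemma phi3_test {d : ℕ} (A B C : Matrix (Fin d) (Fin d) ℂ) {i j : Fin d} (hij : i ≠ j) (t : ℂ)
    (hpos : ∀ Z : Matrix (Fin d) (Fin d) ℂ, Z.PosSemidef → (Phi3 A B C Z).PosSemidef) :
    ∃ M : Matrix (Fin d) (Fin d) ℂ, M.PosSemidef ∧
      M i i = A i i + A i j * (t * (starRingEnd ℂ) t) ∧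
      M j j = A j i + A j j * (t * (starRingEnd ℂ) t) ∧
      M i j = B i j * (starRingEnd ℂ) t + C i j * t ∧
      M j i = B j i * t + C j i * (starRingEnd ℂ) t := by
  have hvZ : ∀ p q : Fin d,
      (Matrix.of fun p q => (if p = i then 1 else if p = j then t else 0) *
        (starRingEnd ℂ) (if q = i then 1 else if q = j then t else 0)) p q
      = (if p = i then 1 else if p = j then t else 0) *
        (starRingEnd ℂ) (if q = i then 1 else if q = j then t else 0) := fun p q => rfl
  refine ⟨Phi3 A B C (Matrix.of fun p q => (if p = i then 1 else if p = j then t else 0) *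
      (starRingEnd ℂ) (if q = i then 1 else if q = j then t else 0)),
    hpos _ (rankOnePSD (fun p => if p = i then 1 else if p = j then t else 0)), ?_, ?_, ?_, ?_⟩
  · rw [phi3_apply_diag]
    rw [sum_two hij _ (fun k hki hkj => by simp [hvZ, hki, hkj])]
    simp [hvZ, hij, hij.symm]
  · rw [phi3_apply_diag]
    rw [sum_two hij _ (fun k hki hkj => by simp [hvZ, hki, hkj])]
    simp [hvZ, hij, hij.symm]
  · rw [phi3_apply_ne A B C _ hij]
    simp [hvZ, hij, hij.symm]
  · rw [phi3_apply_ne A B C _ hij.symm]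
    simp [hvZ, hij, hij.symm]


theorem stmt17 {d : ℕ} (A B C : Matrix (Fin d) (Fin d) ℂ)
    (hdiag : ∀ i, A i i = B i i ∧ A i i = C i i)
    (hpos : ∀ Z : Matrix (Fin d) (Fin d) ℂ, Z.PosSemidef → (Phi3 A B C Z).PosSemidef) :
    (∀ i j, (A i j).im = 0 ∧ 0 ≤ (A i j).re) ∧
    B.IsHermitian ∧ C.IsHermitian ∧
    (∀ i j, i ≠ j →
      0 ≤ Real.sqrt ((A i i).re * (A j j).re) + Real.sqrt ((A i j).re * (A j i).re)
            - ‖B i j‖ - ‖C i j‖) := by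
  -- Part (i)
  have hA : ∀ i j, (0:ℂ) ≤ A i j := by
    intro i j
    have hM := hpos _ (rankOnePSD (fun p => if p = j then (1:ℂ) else 0))
    have h := diagNonneg hM i
    rw [phi3_apply_diag] at h
    have hval : (∑ k, A i k * ((Matrix.of fun p q =>
        (if p = j then (1:ℂ) else 0) * (starRingEnd ℂ) (if q = j then (1:ℂ) else 0)) k k))
        = A i j := by
      have hstep : ∀ k, A i k * ((Matrix.of fun p q =>
          (if p = j then (1:ℂ) else 0) * (starRingEnd ℂ) (if q = j then (1:ℂ) else 0)) k k)
          = if k = j then A i j else 0 := by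
        intro k
        by_cases hk : k = j <;> simp [hk]
      rw [Finset.sum_congr rfl fun k _ => hstep k, Finset.sum_ite_eq']
      simp
    rwa [hval] at h
  have hAre : ∀ i j, (A i j).im = 0 ∧ 0 ≤ (A i j).re := by
    intro i j
    have h := Complex.le_def.mp (hA i j)
    exact ⟨by simpa using h.2.symm, by simpa using h.1⟩
  have hAeq : ∀ i j, A i j = ((A i j).re : ℂ) := fun i j =>
    Complex.ext rfl (by simp [(hAre i j).1])
  -- Part (ii)
  have herm : ∀ i j : Fin d, (starRingEnd ℂ) (B j i) = B i j ∧ (starRingEnd ℂ) (C j i) = C i j := by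
    intro i j
    by_cases hij : i = j
    · subst hij
      rw [← (hdiag i).1, ← (hdiag i).2]
      constructor <;> exact Complex.conj_eq_iff_im.mpr (hAre i i).1
    · obtain ⟨M1, hM1, _, _, h1ij, h1ji⟩ := phi3_test A B C hij 1 hpos
      obtain ⟨M2, hM2, _, _, h2ij, h2ji⟩ := phi3_test A B C hij Complex.I hpos
      have e1 : (starRingEnd ℂ) (M1 j i) = M1 i j := hM1.1.apply i j
      have e2 : (starRingEnd ℂ) (M2 j i) = M2 i j := hM2.1.apply i j
      rw [h1ij, h1ji] at e1
      rw [h2ij, h2ji] at e2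
      simp only [_root_.map_one, mul_one, _root_.map_add, _root_.map_mul] at e1
      -- e1 : conj (B j i) + conj (C j i) = B i j + C i j
      simp only [_root_.map_add, _root_.map_mul, map_neg, Complex.conj_I, Complex.conj_conj, mul_neg, neg_mul] at e2
      -- e2 : conj (B j i) * (-I) + conj (C j i) * I = B i j * (-I) + C i j * I
      have e2' : Complex.I * ((starRingEnd ℂ) (B j i) - (starRingEnd ℂ) (C j i))
          = Complex.I * (B i j - C i j) := by linear_combination -e2
      have e2'' := mul_left_cancel₀ Complex.I_ne_zero e2'
      constructor
      · linear_combination (e1 + e2'') / 2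
      · linear_combination (e1 - e2'') / 2
  refine ⟨hAre, Matrix.IsHermitian.ext fun i j => (herm i j).1,
    Matrix.IsHermitian.ext fun i j => (herm i j).2, ?_⟩
  -- Part (iii)
  intro i j hij
  obtain ⟨ζ, hζ1, hζ2⟩ := phaseExists (B i j) (C i j)
  have hζζ : ζ * (starRingEnd ℂ) ζ = 1 := by
    rw [Complex.mul_conj, Complex.normSq_eq_norm_sq, hζ1]; norm_num
  set α := (A i i).re with hα
  set β := (A j j).re with hβ
  set γ := (A i j).re with hγ
  set δ := (A j i).re with hδ
  set L := ‖B i j‖ + ‖C i j‖ with hL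
  have hLnn : 0 ≤ L := by positivity
  have hstep : ∀ s : ℝ, 0 < s → L ^ 2 * s ≤ α * δ + (α * β + γ * δ) * s + γ * β * s ^ 2 := by
    intro s hs
    obtain ⟨M, hM, hii, hjj, hijE, _⟩ :=
      phi3_test A B C hij ((Real.sqrt s : ℝ) * (starRingEnd ℂ) ζ) hpos
    have hrr : (Real.sqrt s : ℝ) * Real.sqrt s = s := Real.mul_self_sqrt hs.le
    have htt : ((Real.sqrt s : ℝ) * (starRingEnd ℂ) ζ) *
        (starRingEnd ℂ) ((Real.sqrt s : ℝ) * (starRingEnd ℂ) ζ) = ((s:ℝ):ℂ) := by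
      rw [_root_.map_mul, Complex.conj_ofReal, Complex.conj_conj]
      calc ((Real.sqrt s : ℝ):ℂ) * (starRingEnd ℂ) ζ * (((Real.sqrt s : ℝ):ℂ) * ζ)
          = (((Real.sqrt s : ℝ):ℂ) * ((Real.sqrt s : ℝ):ℂ)) * (ζ * (starRingEnd ℂ) ζ) := by ring
        _ = ((s:ℝ):ℂ) := by rw [hζζ, mul_one, ← Complex.ofReal_mul, hrr]
    have hMii : M i i = ((α + γ * s : ℝ) : ℂ) := by
      rw [hii, htt, hAeq i i, hAeq i j]; push_cast; ring
    have hMjj : M j j = ((δ + β * s : ℝ) : ℂ) := by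
      rw [hjj, htt, hAeq j i, hAeq j j]; push_cast; ring
    have hMij : ‖M i j‖ = Real.sqrt s * L := by
      have harr : M i j = ((Real.sqrt s : ℝ) : ℂ) * (B i j * ζ + C i j * (starRingEnd ℂ) ζ) := by
        rw [hijE, _root_.map_mul, Complex.conj_ofReal, Complex.conj_conj]; ring
      rw [harr, norm_mul, Complex.norm_real, Real.norm_eq_abs, abs_of_nonneg (Real.sqrt_nonneg s), hζ2]
    have hb := entryBound hM hij
    rw [hMij, hMii, hMjj] at hb
    simp only [Complex.ofReal_re] at hb
    have : (Real.sqrt s * L) ^ 2 = L ^ 2 * s := by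
      rw [mul_pow]; rw [Real.sq_sqrt hs.le]; ring
    rw [this] at hb
    nlinarith [hb]
  have hαnn : 0 ≤ α := (hAre i i).2
  have hβnn : 0 ≤ β := (hAre j j).2
  have hγnn : 0 ≤ γ := (hAre i j).2
  have hδnn : 0 ≤ δ := (hAre j i).2
  have hkey := realIneq hLnn (mul_nonneg hαnn hδnn)
    (add_nonneg (mul_nonneg hαnn hβnn) (mul_nonneg hγnn hδnn)) (mul_nonneg hγnn hβnn) hstep
  have hR : (Real.sqrt (α * β) + Real.sqrt (γ * δ)) ^ 2
      = α * β + γ * δ + 2 * Real.sqrt (α * δ * (γ * β)) := by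
    have h1 : Real.sqrt (α * β) ^ 2 = α * β := Real.sq_sqrt (mul_nonneg hαnn hβnn)
    have h2 : Real.sqrt (γ * δ) ^ 2 = γ * δ := Real.sq_sqrt (mul_nonneg hγnn hδnn)
    have h3 : Real.sqrt (α * β) * Real.sqrt (γ * δ) = Real.sqrt (α * δ * (γ * β)) := by
      rw [← Real.sqrt_mul (mul_nonneg hαnn hβnn)]
      congr 1
      ring
    nlinarith [h1, h2, h3]
  have hfin : L ^ 2 ≤ (Real.sqrt (α * β) + Real.sqrt (γ * δ)) ^ 2 := by
    rw [hR]; linarith [hkey]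
  have := Real.sqrt_le_sqrt hfin
  rw [Real.sqrt_sq hLnn, Real.sqrt_sq (by positivity)] at this
  linarith [this]
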